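/- Let C_n be the cycle on n ≥ 3 vertices and let X_{C_n} be the number of vertices with nonzero in-degree after a random orientation of the edges of C_n. Then H(X_{C_n}) = H(Bin(n,e)), where Bin(n,e) is a Binomial(n, 1/2) random variable conditioned to be even. -/

import Mathlib

open Finset

/-- Shannon entropy (base 2) of a random variable `X` defined on a finite sample space
with probability mass function `p`:  `H(X) = -∑_s P[X = s] log₂ P[X = s]`. -/
noncomputable def shannonEntropy {Ω S : Type*} [Fintype Ω] [DecidableEq S]
    (p : Ω → ℝ) (X : Ω → S) : ℝ :=
  -∑ s ∈ Finset.univ.image X,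
      (∑ ω ∈ Finset.univ.filter (fun ω => X ω = s), p ω) *
        Real.logb 2 (∑ ω ∈ Finset.univ.filter (fun ω => X ω = s), p ω)

/-- Shannon entropy (base 2) of `Bin(n, e)`, a `Binomial(n, 1/2)` random variable
conditioned to be even: it takes each even value `k ∈ {0, …, n}` with probability
`(n.choose k) / 2 ^ (n-1)` and each odd value with probability `0`. -/
noncomputable def binEvenEntropy (n : ℕ) : ℝ :=
  -∑ k ∈ Finset.range (n + 1),
      (if Even k then (n.choose k : ℝ) / 2 ^ (n - 1) else 0) *
        Real.logb 2 (if Even k then (n.choose k : ℝ) / 2 ^ (n - 1) else 0)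

namespace CycleEntropyAux

variable {n : ℕ} [NeZero n]

/-- number of "descents" (false followed by true) of a cyclic boolean sequence -/
def T (n : ℕ) [NeZero n] (b : ZMod n → Bool) : ℕ :=
  (univ.filter (fun i : ZMod n => b i = false ∧ b (i+1) = true)).card

def Tt (n : ℕ) [NeZero n] (b : ZMod n → Bool) : ℕ :=
  (univ.filter (fun i : ZMod n => b i = true ∧ b (i+1) = false)).card

/-- set of positions where the sequence changes value -/
def D (n : ℕ) [NeZero n] (b : ZMod n → Bool) : Finset (ZMod n) :=
  univ.filter (fun i => b i ≠ b (i+1))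

lemma T_eq_Tt (b : ZMod n → Bool) : T n b = Tt n b := by
  have h0 : (∑ i : ZMod n, (((if b (i+1) = true then 1 else 0) : ℤ)
      - (if b i = true then 1 else 0))) = 0 := by
    rw [Finset.sum_sub_distrib, sub_eq_zero]
    exact Fintype.sum_equiv (Equiv.addRight 1) _ _ (fun i => rfl)
  have key : ∀ i : ZMod n,
      ((if b i = false ∧ b (i+1) = true then 1 else 0) : ℤ)
        - (if b i = true ∧ b (i+1) = false then 1 else 0)
      = (if b (i+1) = true then 1 else 0) - (if b i = true then 1 else 0) := by
    intro i; cases h1 : b i <;> cases h2 : b (i+1) <;> simp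
  have : ((T n b : ℤ)) - (Tt n b : ℤ) = 0 := by
    have h1 : ((T n b : ℤ)) - (Tt n b : ℤ)
        = ∑ i : ZMod n, (((if b (i+1) = true then 1 else 0) : ℤ)
            - (if b i = true then 1 else 0)) := by
      rw [T, Tt, Finset.card_filter, Finset.card_filter]
      push_cast
      rw [← Finset.sum_sub_distrib]
      exact Finset.sum_congr rfl (fun i _ => key i)
    rw [h1, h0]
  omega

lemma card_D (b : ZMod n → Bool) : (D n b).card = 2 * T n b := by
  have hsplit : D n b = (univ.filter (fun i : ZMod n => b i = false ∧ b (i+1) = true))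
      ∪ (univ.filter (fun i : ZMod n => b i = true ∧ b (i+1) = false)) := by
    rw [← Finset.filter_or]
    apply Finset.filter_congr
    intro i _
    cases h1 : b i <;> cases h2 : b (i+1) <;> simp
  have hdisj : Disjoint (univ.filter (fun i : ZMod n => b i = false ∧ b (i+1) = true))
      (univ.filter (fun i : ZMod n => b i = true ∧ b (i+1) = false)) := by
    rw [Finset.disjoint_filter]
    rintro i - ⟨h1, -⟩ ⟨h2, -⟩
    rw [h1] at h2; exact absurd h2 (by simp)
  rw [hsplit, Finset.card_union_of_disjoint hdisj, ← T, ← Tt, ← T_eq_Tt, two_mul]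

lemma two_T_le (b : ZMod n → Bool) : 2 * T n b ≤ n := by
  rw [← card_D]
  calc (D n b).card ≤ (univ : Finset (ZMod n)).card := Finset.card_le_univ _
  _ = n := by rw [Finset.card_univ, ZMod.card]

lemma phi_inj (b b' : ZMod n → Bool) (h0 : b 0 = b' 0) (hD : D n b = D n b') : b = b' := by
  funext i
  obtain ⟨k, rfl⟩ : ∃ k : ℕ, (k : ZMod n) = i := ⟨i.val, ZMod.natCast_rightInverse i⟩
  induction k with
  | zero => simpa using h0
  | succ k ih =>
    have hm : ((k : ZMod n) ∈ D n b) ↔ ((k : ZMod n) ∈ D n b') := by rw [hD]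
    simp only [D, Finset.mem_filter, Finset.mem_univ, true_and, ih] at hm
    push_cast
    cases hA : b ((k : ZMod n) + 1) <;> cases hA' : b' ((k : ZMod n) + 1) <;>
      simp_all

lemma sum_two_choose_even {n : ℕ} (hn : 1 ≤ n) :
    ∑ j ∈ range (n+1), 2 * n.choose (2*j) = 2^n := by
  have A : (∑ k ∈ range (n+1), (n.choose k : ℤ)) = 2^n := by
    exact_mod_cast congrArg (Nat.cast : ℕ → ℤ) (Nat.sum_range_choose n)
  have B : (∑ k ∈ range (n+1), (-1:ℤ)^k * n.choose k) = 0 :=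
    Int.alternating_sum_range_choose_of_ne (by omega)
  have C : (∑ k ∈ range (n+1), (if Even k then 2 * (n.choose k : ℤ) else 0)) = 2^n := by
    have : ∀ k, (if Even k then 2 * (n.choose k : ℤ) else 0)
        = (n.choose k : ℤ) + (-1:ℤ)^k * n.choose k := by
      intro k
      by_cases h : Even k
      · rw [if_pos h, h.neg_one_pow]; ring
      · rw [if_neg h, (Nat.not_even_iff_odd.1 h).neg_one_pow]; ring
    rw [Finset.sum_congr rfl (fun k _ => this k), Finset.sum_add_distrib, A, B, add_zero]
  have D2 : (∑ j ∈ range (n+1), 2 * ((n.choose (2*j)) : ℤ)) = 2^n := by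
    rw [← C, ← Finset.sum_filter]
    rw [← Finset.sum_filter_add_sum_filter_not (range (n+1)) (fun j => 2*j ≤ n)
      (fun j => 2 * ((n.choose (2*j)) : ℤ))]
    have hz : (∑ j ∈ (range (n+1)).filter (fun j => ¬ 2*j ≤ n),
        2 * ((n.choose (2*j)) : ℤ)) = 0 := by
      apply Finset.sum_eq_zero
      intro j hj
      rw [Finset.mem_filter] at hj
      rw [Nat.choose_eq_zero_of_lt (by omega)]
      simp
    rw [hz, add_zero]
    refine Finset.sum_nbij' (fun j => 2*j) (fun k => k/2) ?_ ?_ ?_ ?_ ?_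
    · intro a ha; simp only [Finset.mem_filter, Finset.mem_range] at ha ⊢
      exact ⟨by omega, even_two_mul a⟩
    · intro k hk; simp only [Finset.mem_filter, Finset.mem_range, Nat.even_iff] at hk ⊢
      omega
    · intro a _; show 2*a/2 = a; omega
    · intro k hk; simp only [Finset.mem_filter, Finset.mem_range, Nat.even_iff] at hk
      show 2*(k/2) = k; omega
    · intro a _; rfl
  exact_mod_cast D2

lemma fiber_card_le (j : ℕ) :
    ((univ : Finset (ZMod n → Bool)).filter (fun b => T n b = j)).card
      ≤ 2 * n.choose (2*j) := by
  have h := Finset.card_le_card_of_injOn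
    (s := (univ : Finset (ZMod n → Bool)).filter (fun b => T n b = j))
    (t := (univ : Finset Bool) ×ˢ Finset.powersetCard (2*j) (univ : Finset (ZMod n)))
    (f := fun b : ZMod n → Bool => (b 0, D n b))
    (fun b hb => by
      rw [Finset.mem_coe, Finset.mem_filter] at hb
      rw [Finset.mem_coe, Finset.mem_product, Finset.mem_powersetCard]
      exact ⟨Finset.mem_univ _, Finset.subset_univ _, by rw [card_D, hb.2]⟩)
    (fun b _ b' _ h => phi_inj b b' (congrArg Prod.fst h) (congrArg Prod.snd h))
  calc _ ≤ _ := h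
  _ = 2 * n.choose (2*j) := by
    rw [Finset.card_product, Finset.card_powersetCard, Finset.card_univ, Finset.card_univ,
      ZMod.card, Fintype.card_bool]

lemma fiber_card (hn : 1 ≤ n) (j : ℕ) :
    ((univ : Finset (ZMod n → Bool)).filter (fun b => T n b = j)).card
      = 2 * n.choose (2*j) := by
  by_cases hj : j ≤ n
  · have hpart : ((univ : Finset (ZMod n → Bool))).card
        = ∑ j ∈ range (n+1),
            ((univ : Finset (ZMod n → Bool)).filter (fun b => T n b = j)).card :=
      Finset.card_eq_sum_card_fiberwise (fun b _ => by
        rw [Finset.mem_coe, Finset.mem_range]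
        have := two_T_le b
        omega)
    have htot : ((univ : Finset (ZMod n → Bool))).card = 2^n := by
      rw [Finset.card_univ, Fintype.card_fun, Fintype.card_bool, ZMod.card]
    have hsum : (∑ j ∈ range (n+1), ((univ : Finset (ZMod n → Bool)).filter
        (fun b => T n b = j)).card) = ∑ j ∈ range (n+1), 2 * n.choose (2*j) := by
      rw [← hpart, htot, sum_two_choose_even hn]
    exact (Finset.sum_eq_sum_iff_of_le (fun i _ => fiber_card_le i)).1 hsum j
      (Finset.mem_range.2 (by omega))
  · rw [Nat.choose_eq_zero_of_lt (by omega), Nat.mul_zero, Finset.card_eq_zero,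
      Finset.filter_eq_empty_iff]
    intro b _
    have := two_T_le b
    omega

section
variable (hn : 3 ≤ n)
include hn

omit [NeZero n] in
lemma self_ne_add_one (i : ZMod n) : i ≠ i + 1 := by
  intro h
  have h1 : (0 : ZMod n) = 1 := by
    have := h
    nth_rewrite 1 [← add_zero i] at this
    exact add_left_cancel this
  haveI : Fact (1 < n) := ⟨by omega⟩
  exact one_ne_zero h1.symm

/-- orientation/bool-sequence equivalence -/
noncomputable def oe : {g : ZMod n → ZMod n // ∀ i, g i = i ∨ g i = i + 1} ≃ (ZMod n → Bool) where
  toFun g := fun i => decide (g.1 i = i + 1)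
  invFun b := ⟨fun i => if b i then i + 1 else i, fun i => by
    by_cases h : b i <;> simp [h]⟩
  left_inv g := by
    apply Subtype.ext
    funext i
    rcases g.2 i with h | h <;> simp [h, (self_ne_add_one hn i).symm, Ne.symm]
  right_inv b := by
    funext i
    by_cases h : b i <;> simp [h, (self_ne_add_one hn i)]

lemma X_val (g : {g : ZMod n → ZMod n // ∀ i, g i = i ∨ g i = i + 1}) :
    (Finset.univ.filter fun v : ZMod n => ∃ i, g.1 i = v).card = n - T n (oe hn g) := by
  set b := oe hn g with hb
  have hbt : ∀ i, b i = true ↔ g.1 i = i + 1 := fun i => by simp [hb, oe]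
  have hbf : ∀ i, b i = false ↔ g.1 i = i := by
    intro i
    rcases g.2 i with h | h
    · simp [h, hbt, Bool.eq_false_iff, Ne.symm, self_ne_add_one hn i]
    · constructor
      · intro hf
        have := (hbt i).2 h
        rw [hf] at this
        exact absurd this (by simp)
      · intro h2
        rw [h2] at h
        exact absurd h (self_ne_add_one hn i)
  have hcompl : ∀ v : ZMod n, (¬ ∃ i, g.1 i = v) ↔ (b (v-1) = false ∧ b v = true) := by
    intro v
    constructor
    · intro h
      push_neg at h
      constructor
      · rw [hbf]
        rcases g.2 (v-1) with h1 | h1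
        · exact h1
        · rw [sub_add_cancel] at h1; exact absurd h1 (h _)
      · rw [hbt]
        rcases g.2 v with h1 | h1
        · exact absurd h1 (h _)
        · exact h1
    · rintro ⟨hf, ht⟩ ⟨i, hi⟩
      rcases g.2 i with h1 | h1
      · rw [h1] at hi
        subst hi
        rw [hbt] at ht
        rw [h1] at ht
        exact self_ne_add_one hn i ht
      · rw [h1] at hi
        have : i = v - 1 := by rw [← hi]; ring
        subst this
        rw [hbf] at hf
        rw [h1] at hf
        exact self_ne_add_one hn (v-1) hf.symm
  have hcard2 : ((univ : Finset (ZMod n)).filter (fun v => ¬ ∃ i, g.1 i = v)).card = T n b := by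
    rw [T]
    apply Finset.card_equiv (Equiv.subRight (1 : ZMod n))
    intro v
    simp only [Finset.mem_filter, Finset.mem_univ, true_and, Equiv.subRight_apply,
      sub_add_cancel]
    rw [hcompl v]
  have hsplit : ((univ : Finset (ZMod n)).filter (fun v => ∃ i, g.1 i = v)).card
      + ((univ : Finset (ZMod n)).filter (fun v => ¬ ∃ i, g.1 i = v)).card = n := by
    rw [Finset.card_filter_add_card_filter_not, Finset.card_univ, ZMod.card]
  have hT := two_T_le b
  omega

end

end CycleEntropyAux

open CycleEntropyAux

theorem cycle_entropy_eq_binEven (n : ℕ) [NeZero n] (hn : 3 ≤ n) :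
    shannonEntropy
        (fun _ : {g : ZMod n → ZMod n // ∀ i, g i = i ∨ g i = i + 1} =>
          (1 : ℝ) / 2 ^ n)
        (fun g => (Finset.univ.filter fun v : ZMod n => ∃ i, g.1 i = v).card) =
      binEvenEntropy n := by
  classical
  set X : {g : ZMod n → ZMod n // ∀ i, g i = i ∨ g i = i + 1} → ℕ :=
    fun g => (Finset.univ.filter fun v : ZMod n => ∃ i, g.1 i = v).card with hX
  set q : ℕ → ℝ := fun k => (n.choose k : ℝ) / 2^(n-1) with hq
  have hn1 : 1 ≤ n := by omega
  -- probability of each fiber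
  have hfib : ∀ s ∈ (univ.image X), s ≤ n ∧ 2 * (n - s) ≤ n ∧
      ((univ.filter (fun ω => X ω = s)).card = 2 * n.choose (2*(n - s))) := by
    intro s hs
    obtain ⟨g, -, rfl⟩ := Finset.mem_image.1 hs
    have hXg : X g = n - T n (oe hn g) := X_val hn g
    have hT := two_T_le (oe hn g)
    refine ⟨by omega, by omega, ?_⟩
    have hcard : (univ.filter (fun ω => X ω = X g)).card
        = ((univ : Finset (ZMod n → Bool)).filter (fun b => T n b = n - X g)).card := by
      apply Finset.card_equiv (oe hn)
      intro w
      simp only [Finset.mem_filter, Finset.mem_univ, true_and]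
      have hw : X w = n - T n (oe hn w) := X_val hn w
      have hTw := two_T_le (oe hn w)
      constructor
      · intro h; omega
      · intro h; omega
    rw [hcard, fiber_card hn1]
  have hW : ∀ s ∈ (univ.image X),
      (∑ ω ∈ univ.filter (fun ω => X ω = s), (1:ℝ)/2^n) = q (2*(n-s)) := by
    intro s hs
    obtain ⟨-, -, hc⟩ := hfib s hs
    rw [Finset.sum_const, hc, nsmul_eq_mul]
    have h2n : (2:ℝ)^n = 2 * 2^(n-1) :=
      (mul_pow_sub_one (n := n) (Nat.one_le_iff_ne_zero.mp hn1) (2:ℝ)).symm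
    rw [hq]
    push_cast
    rw [h2n]
    have : (2:ℝ)^(n-1) ≠ 0 := by positivity
    field_simp
  rw [shannonEntropy, binEvenEntropy]
  congr 1
  -- rewrite RHS as a sum over even k
  have hR : (∑ k ∈ Finset.range (n + 1),
      (if Even k then (n.choose k : ℝ) / 2 ^ (n - 1) else 0) *
        Real.logb 2 (if Even k then (n.choose k : ℝ) / 2 ^ (n - 1) else 0))
      = ∑ k ∈ (Finset.range (n+1)).filter (fun k => Even k),
          q k * Real.logb 2 (q k) := by
    rw [Finset.sum_filter]
    apply Finset.sum_congr rfl
    intro k _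
    by_cases h : Even k
    · simp only [if_pos h, hq]
    · simp only [if_neg h, zero_mul]
  rw [hR]
  refine Finset.sum_nbij' (fun s => 2*(n-s)) (fun k => n - k/2) ?_ ?_ ?_ ?_ ?_
  · intro s hs
    obtain ⟨h1, h2, -⟩ := hfib s hs
    simp only [Finset.mem_filter, Finset.mem_range]
    exact ⟨by omega, even_two_mul _⟩
  · intro k hk
    simp only [Finset.mem_filter, Finset.mem_range, Nat.even_iff] at hk
    -- there exists b with T n b = k/2
    have hpos : 0 < ((univ : Finset (ZMod n → Bool)).filter (fun b => T n b = k/2)).card := by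
      rw [fiber_card hn1]
      have h2 : 2*(k/2) = k := by omega
      rw [h2]
      have := Nat.choose_pos (show k ≤ n by omega)
      omega
    obtain ⟨b, hb⟩ := Finset.card_pos.1 hpos
    rw [Finset.mem_filter] at hb
    apply Finset.mem_image.2
    refine ⟨(oe hn).symm b, Finset.mem_univ _, ?_⟩
    have hxv : X ((oe hn).symm b) = n - T n (oe hn ((oe hn).symm b)) := X_val hn _
    rw [hxv, Equiv.apply_symm_apply, hb.2]
  · intro s hs
    obtain ⟨h1, h2, -⟩ := hfib s hs
    show n - (2*(n-s))/2 = s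
    omega
  · intro k hk
    simp only [Finset.mem_filter, Finset.mem_range, Nat.even_iff] at hk
    show 2*(n - (n - k/2)) = k
    omega
  · intro s hs
    rw [hW s hs]
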